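/- For every directed graph G and every n ≥ 1, ρ(G^n) ≤ e^{n·Σ(G)}, i.e., the maximum cardinality of a subset of vertices of the n-fold strong power G^n inducing an acyclic subgraph is at most e raised to n times the Sperner capacity of G. -/

import Mathlib

open Real Filter

/-- Adjacency relation of the `n`-fold strong power of the directed graph with
adjacency relation `E`: there is an edge from `x` to `y` iff `x ≠ y` and in each
coordinate `j` either `x j = y j` or there is an edge from `x j` to `y j`. -/
def strongPow {V : Type*} (E : V → V → Prop) (n : ℕ) (x y : Fin n → V) : Prop :=
  x ≠ y ∧ ∀ j, x j = y j ∨ E (x j) (y j)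

/-- `l` is a directed cycle of the graph `E` all of whose vertices lie in `A`:
a list of at least two distinct vertices with an edge between consecutive
vertices and an edge from the last vertex back to the first. -/
def IsCycleIn {V : Type*} (E : V → V → Prop) (A : Set V) (l : List V) : Prop :=
  2 ≤ l.length ∧ l.Nodup ∧ (∀ x ∈ l, x ∈ A) ∧ l.Chain' E ∧
    ∀ x ∈ l.head?, ∀ y ∈ l.getLast?, E y x

/-- The subgraph of `E` induced by `A` is acyclic. -/
def AcyclicOn {V : Type*} (E : V → V → Prop) (A : Set V) : Prop :=
  ¬ ∃ l : List V, IsCycleIn E A l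

/-- `α(G)`: the maximum cardinality of an independent set in the graph `E`. -/
noncomputable def alphaOf {V : Type*} [Fintype V] (E : V → V → Prop) : ℕ :=
  sSup {k : ℕ | ∃ A : Finset V, (∀ x ∈ A, ∀ y ∈ A, ¬ E x y) ∧ A.card = k}

/-- `ρ(G)`: the maximum cardinality of a subset of vertices inducing an acyclic
subgraph of `E`. -/
noncomputable def rhoOf {V : Type*} [Fintype V] (E : V → V → Prop) : ℕ :=
  sSup {k : ℕ | ∃ A : Finset V, AcyclicOn E ↑A ∧ A.card = k}

/-- The Sperner capacity `Σ(G) = lim_n (1/n) log α(Gⁿ) = sup_n (1/n) log α(Gⁿ)`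
of the graph `E` (natural logarithms). -/
noncomputable def spernerCap {V : Type*} [Fintype V] (E : V → V → Prop) : ℝ :=
  sSup {x : ℝ | ∃ n : ℕ, 1 ≤ n ∧ x = Real.log (alphaOf (strongPow E n)) / n}

lemma exists_source {E : V → V → Prop} (hirr : ∀ x, ¬ E x x) (A : Finset V)
    (hA : A.Nonempty) (hac : AcyclicOn E ↑A) : ∃ x ∈ A, ∀ y ∈ A, ¬ E y x := by
  classical
  by_contra hcon
  push_neg at hcon
  have step : ∀ p : {x : V // x ∈ A}, ∃ q : {x : V // x ∈ A}, E q.1 p.1 := by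
    rintro ⟨x, hx⟩
    obtain ⟨y, hy, hE⟩ := hcon x hx
    exact ⟨⟨y, hy⟩, hE⟩
  choose st hst using step
  set g : ℕ → {x : V // x ∈ A} := fun k => st^[k] ⟨hA.choose, hA.choose_spec⟩ with hgdef
  set h : ℕ → V := fun k => (g k).1 with hhdef
  have hmem : ∀ k, h k ∈ A := fun k => (g k).2
  have hg : ∀ k, E (h (k+1)) (h k) := by
    intro k
    have : g (k+1) = st (g k) := Function.iterate_succ_apply' st k _
    simp only [hhdef, this]; exact hst (g k)
  obtain ⟨a, b, hab, heq⟩ := Finite.exists_ne_map_eq_of_infinite g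
  -- minimal j such that ∃ i < j, h i = h j
  have hP : ∃ j, ∃ i < j, h i = h j := by
    rcases Nat.lt_or_ge a b with hlt | hge
    · exact ⟨b, a, hlt, congrArg Subtype.val heq⟩
    · exact ⟨a, b, lt_of_le_of_ne hge (Ne.symm hab), congrArg Subtype.val heq.symm⟩
  obtain ⟨i, hij, hgij⟩ := Nat.find_spec hP
  have hmin : ∀ j < Nat.find hP, ¬ ∃ i < j, h i = h j := fun j hj => Nat.find_min hP hj
  set j₀ := Nat.find hP with hj₀
  clear_value j₀
  have hij2 : i + 2 ≤ j₀ := by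
    by_contra hcon2
    have hji : j₀ = i + 1 := by omega
    rw [hji] at hgij
    have := hg i
    rw [← hgij] at this
    exact hirr _ this
  set L := j₀ - i with hL
  clear_value L
  have hL2 : 2 ≤ L := by omega
  have hinjr : ∀ k1 < L, ∀ k2 < L, h (j₀ - 1 - k1) = h (j₀ - 1 - k2) → k1 = k2 := by
    intro k1 hk1 k2 hk2 hh
    by_contra hne
    rcases Nat.lt_or_ge k1 k2 with hlt | hge
    · exact hmin (j₀ - 1 - k1) (by omega) ⟨j₀ - 1 - k2, by omega, hh.symm⟩
    · have hlt : k2 < k1 := by omega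
      exact hmin (j₀ - 1 - k2) (by omega) ⟨j₀ - 1 - k1, by omega, hh⟩
  set l : List V := (List.range L).map (fun k => h (j₀ - 1 - k)) with hl
  apply hac
  refine ⟨l, ?_, ?_, ?_, ?_, ?_⟩
  · simp [hl, hL2]
  · refine List.Nodup.map_on ?_ (List.nodup_range (n := L))
    intro x hx y hy hxy
    exact hinjr x (List.mem_range.mp hx) y (List.mem_range.mp hy) hxy
  · intro x hx
    simp only [hl, List.mem_map] at hx
    obtain ⟨k, _, rfl⟩ := hx
    exact hmem _
  · rw [hl]; unfold List.Chain'; rw [List.isChain_map]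
    obtain ⟨L', hLL'⟩ : ∃ L', L = L' + 1 := ⟨L - 1, by omega⟩
    rw [hLL', List.isChain_range_succ]
    intro m hm
    have harith : j₀ - 1 - m = (j₀ - 1 - (m + 1)) + 1 := by omega
    rw [harith]
    exact hg _
  · intro x hx y hy
    have hhead : l.head? = some (h (j₀ - 1)) := by
      rw [hl, List.head?_map]
      obtain ⟨L', hLL'⟩ : ∃ L', L = L' + 1 := ⟨L - 1, by omega⟩
      rw [hLL']
      simp [List.range_succ_eq_map]
    have hlast : l.getLast? = some (h i) := by
      rw [List.getLast?_eq_getElem?]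
      have hlen : l.length = L := by simp [hl]
      rw [hlen, hl]
      rw [List.getElem?_map]
      rw [List.getElem?_range (by omega)]
      simp only [Option.map_some]
      congr 2
      omega
    rw [hhead] at hx; rw [hlast] at hy
    simp only [Option.mem_def, Option.some.injEq] at hx hy
    subst hx; subst hy
    have : E (h ((j₀ - 1) + 1)) (h (j₀ - 1)) := hg _
    rw [show j₀ - 1 + 1 = j₀ by omega, ← hgij] at this
    exact this

lemma acyclicOn_mono {E : V → V → Prop} {A B : Set V} (h : A ⊆ B) (hB : AcyclicOn E B) :
    AcyclicOn E A := by
  rintro ⟨l, h1, h2, h3, h4, h5⟩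
  exact hB ⟨l, h1, h2, fun x hx => h (h3 x hx), h4, h5⟩

lemma acyclicOn_empty (E : V → V → Prop) : AcyclicOn E (∅ : Set V) := by
  rintro ⟨l, hl, _, hmem, _, _⟩
  match l with
  | [] => simp at hl
  | a :: t => exact hmem a (by simp)

lemma exists_rank {E : V → V → Prop} (hirr : ∀ x, ¬ E x x) (A : Finset V)
    (hac : AcyclicOn E ↑A) : ∃ f : V → ℕ, ∀ a ∈ A, ∀ b ∈ A, E a b → f a < f b := by
  classical
  induction A using Finset.strongInduction with
  | _ A ih =>
    rcases A.eq_empty_or_nonempty with rfl | hne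
    · exact ⟨fun _ => 0, by simp⟩
    · obtain ⟨x, hx, hsrc⟩ := exists_source hirr A hne hac
      obtain ⟨f, hf⟩ := ih (A.erase x) (Finset.erase_ssubset hx)
        (acyclicOn_mono (by simp [Finset.coe_subset]) hac)
      refine ⟨fun w => if w = x then 0 else f w + 1, ?_⟩
      intro a ha b hb hE
      by_cases hbx : b = x
      · exact absurd (hbx ▸ hE) (hsrc a ha)
      by_cases hax : a = x
      · simp only [if_pos hax, if_neg hbx]
        omega
      · simp only [if_neg hax, if_neg hbx]
        exact Nat.succ_lt_succ
          (hf a (Finset.mem_erase.mpr ⟨hax, ha⟩) b (Finset.mem_erase.mpr ⟨hbx, hb⟩) hE)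

lemma le_alphaOf {W : Type*} [Fintype W] (E'' : W → W → Prop) (B : Finset W)
    (hB : ∀ x ∈ B, ∀ y ∈ B, ¬ E'' x y) : B.card ≤ alphaOf E'' :=
  le_csSup ⟨Fintype.card W, by rintro k ⟨C, -, rfl⟩; simpa using Finset.card_le_univ C⟩
    ⟨B, hB, rfl⟩

lemma alphaOf_le_card {W : Type*} [Fintype W] (E'' : W → W → Prop) :
    alphaOf E'' ≤ Fintype.card W := by
  have hne : {k : ℕ | ∃ A : Finset W, (∀ x ∈ A, ∀ y ∈ A, ¬ E'' x y) ∧ A.card = k}.Nonempty :=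
    ⟨0, ∅, by simp, rfl⟩
  apply csSup_le hne
  rintro k ⟨C, -, rfl⟩
  simpa using Finset.card_le_univ C

lemma spernerCap_bddAbove [Fintype V] (E : V → V → Prop) :
    BddAbove {x : ℝ | ∃ k : ℕ, 1 ≤ k ∧ x = Real.log (alphaOf (strongPow E k)) / k} := by
  refine ⟨Real.log (Fintype.card V), ?_⟩
  rintro x ⟨k, hk, rfl⟩
  have hα : alphaOf (strongPow E k) ≤ Fintype.card V ^ k := by
    have h := alphaOf_le_card (strongPow E k)
    simpa [Fintype.card_fun] using h
  rcases Nat.eq_zero_or_pos (alphaOf (strongPow E k)) with h0 | hpos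
  · rw [h0]
    simp only [Nat.cast_zero, Real.log_zero, zero_div]
    exact Real.log_natCast_nonneg _
  · rw [div_le_iff₀ (by positivity : (0:ℝ) < (k:ℝ))]
    calc Real.log (alphaOf (strongPow E k))
        ≤ Real.log ((Fintype.card V : ℝ) ^ k) := by
          apply Real.log_le_log (by exact_mod_cast hpos)
          exact_mod_cast hα
      _ = k * Real.log (Fintype.card V) := by rw [Real.log_pow]
      _ = Real.log (Fintype.card V) * k := mul_comm _ _

/-- Counting bound: if `A` induces a subgraph of `Gⁿ` with a rank function `f`,
then `|A|^m ≤ (m M + 1) α(G^{mn})`. -/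
lemma count_bound [Fintype V] (E : V → V → Prop) (n : ℕ) (A : Finset (Fin n → V))
    (f : (Fin n → V) → ℕ) (hf : ∀ a ∈ A, ∀ b ∈ A, strongPow E n a b → f a < f b)
    (M : ℕ) (hM : ∀ a ∈ A, f a ≤ M) (m : ℕ) :
    A.card ^ m ≤ (m * M + 1) * alphaOf (strongPow E (m * n)) := by
  classical
  set S : Finset (Fin m → (Fin n → V)) := Fintype.piFinset (fun _ : Fin m => A) with hS
  have hScard : S.card = A.card ^ m := by
    rw [hS, Fintype.card_piFinset]
    simp
  set w : (Fin m → (Fin n → V)) → ℕ := fun s => ∑ j, f (s j) with hw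
  have hmaps : ∀ s ∈ S, w s ∈ Finset.range (m * M + 1) := by
    intro s hs
    rw [Finset.mem_range]
    have : w s ≤ m * M := by
      calc w s ≤ (Finset.univ : Finset (Fin m)).card • M := by
            apply Finset.sum_le_card_nsmul
            intro j _
            exact hM (s j) ((Fintype.mem_piFinset).mp hs j)
        _ = m * M := by simp [Finset.card_univ, smul_eq_mul]
    omega
  obtain ⟨b, hb, hbmax⟩ := Finset.exists_max_image (Finset.range (m * M + 1))
    (fun b => (S.filter (fun s => w s = b)).card) ⟨0, by simp⟩
  set B := S.filter (fun s => w s = b) with hB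
  have hcount : S.card ≤ (m * M + 1) * B.card := by
    calc S.card = ∑ c ∈ Finset.range (m * M + 1),
          (S.filter (fun s => w s = c)).card := Finset.card_eq_sum_card_fiberwise hmaps
      _ ≤ (Finset.range (m * M + 1)).card • B.card :=
          Finset.sum_le_card_nsmul _ _ _ (fun c hc => hbmax c hc)
      _ = (m * M + 1) * B.card := by simp [smul_eq_mul]
  -- B is independent in the m-fold power of strongPow E n
  have hBind : ∀ s ∈ B, ∀ t ∈ B, ¬ strongPow (strongPow E n) m s t := by
    rintro s hs t ht ⟨hne, hco⟩
    have hsS : s ∈ S := (Finset.mem_filter.mp hs).1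
    have htS : t ∈ S := (Finset.mem_filter.mp ht).1
    have hsA : ∀ j, s j ∈ A := fun j => (Fintype.mem_piFinset).mp hsS j
    have htA : ∀ j, t j ∈ A := fun j => (Fintype.mem_piFinset).mp htS j
    have hle : ∀ j : Fin m, f (s j) ≤ f (t j) := by
      intro j
      rcases hco j with h | h
      · rw [h]
      · exact le_of_lt (hf (s j) (hsA j) (t j) (htA j) h)
    have hex : ∃ j : Fin m, s j ≠ t j := by
      by_contra hh
      push_neg at hh
      exact hne (funext hh)
    obtain ⟨j, hj⟩ := hex
    have hlt : f (s j) < f (t j) := by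
      rcases hco j with h | h
      · exact absurd h hj
      · exact hf (s j) (hsA j) (t j) (htA j) h
    have : w s < w t :=
      Finset.sum_lt_sum (fun i _ => hle i) ⟨j, Finset.mem_univ j, hlt⟩
    have hws : w s = b := (Finset.mem_filter.mp hs).2
    have hwt : w t = b := (Finset.mem_filter.mp ht).2
    omega
  -- transfer to strongPow E (m * n)
  set T : (Fin m → Fin n → V) → (Fin (m * n) → V) :=
    fun s k => s (finProdFinEquiv.symm k).1 (finProdFinEquiv.symm k).2 with hT
  have hTapp : ∀ (s : Fin m → Fin n → V) (i : Fin m) (j : Fin n),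
      T s (finProdFinEquiv (i, j)) = s i j := by
    intro s i j
    simp only [hT, Equiv.symm_apply_apply]
  have hTinj : Function.Injective T := by
    intro s t hst
    funext i j
    rw [← hTapp s i j, ← hTapp t i j, hst]
  have hB'ind : ∀ x ∈ B.image T, ∀ y ∈ B.image T, ¬ strongPow E (m * n) x y := by
    intro x hx y hy
    obtain ⟨s, hs, rfl⟩ := Finset.mem_image.mp hx
    obtain ⟨t, ht, rfl⟩ := Finset.mem_image.mp hy
    rintro ⟨hne, hco⟩
    apply hBind s hs t ht
    refine ⟨fun h => hne (h ▸ rfl), ?_⟩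
    intro i
    by_cases h : s i = t i
    · exact Or.inl h
    · refine Or.inr ⟨h, fun j => ?_⟩
      have := hco (finProdFinEquiv (i, j))
      rwa [hTapp, hTapp] at this
  have hcard' : (B.image T).card = B.card := Finset.card_image_of_injective B hTinj
  have halpha : B.card ≤ alphaOf (strongPow E (m * n)) := by
    rw [← hcard']
    exact le_alphaOf _ _ hB'ind
  calc A.card ^ m = S.card := hScard.symm
    _ ≤ (m * M + 1) * B.card := hcount
    _ ≤ (m * M + 1) * alphaOf (strongPow E (m * n)) := by
        exact Nat.mul_le_mul_left _ halpha


lemma log_card_le {V : Type*} [Fintype V] (E : V → V → Prop) (n : ℕ) (hn : 1 ≤ n)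
    (A : Finset (Fin n → V)) (hA1 : 1 ≤ A.card) (hac : AcyclicOn (strongPow E n) ↑A) :
    Real.log A.card ≤ n * spernerCap E := by
  classical
  have hirrP : ∀ x : Fin n → V, ¬ strongPow E n x x := fun x h => h.1 rfl
  obtain ⟨f, hf⟩ := exists_rank hirrP A hac
  set M := A.sup f with hMdef
  have hM : ∀ a ∈ A, f a ≤ M := fun a ha => Finset.le_sup ha
  have hApos : (0:ℝ) < (A.card : ℝ) := by exact_mod_cast hA1
  have key : ∀ m : ℕ, 1 ≤ m →
      (m:ℝ) * Real.log A.card ≤ Real.log ((m*M+1 : ℕ):ℝ) + ((m*n : ℕ):ℝ) * spernerCap E := by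
    intro m hm
    have hcb := count_bound E n A f hf M hM m
    have hα1 : 1 ≤ alphaOf (strongPow E (m*n)) := by
      by_contra h
      have h0 : alphaOf (strongPow E (m*n)) = 0 := by omega
      rw [h0, mul_zero] at hcb
      have : 1 ≤ A.card ^ m := Nat.one_le_pow m A.card (by omega)
      omega
    have hαpos : (0:ℝ) < (alphaOf (strongPow E (m*n)) : ℝ) := by exact_mod_cast hα1
    have hcast : ((A.card:ℝ))^m ≤ ((m*M+1 : ℕ):ℝ) * (alphaOf (strongPow E (m*n)) : ℝ) := by
      exact_mod_cast hcb
    have hmpos : (0:ℝ) < ((m*M+1 : ℕ):ℝ) := by positivity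
    have hcap : Real.log (alphaOf (strongPow E (m*n))) ≤ ((m*n : ℕ):ℝ) * spernerCap E := by
      have hmn : 1 ≤ m * n := Nat.one_le_iff_ne_zero.mpr (by positivity)
      have hmem : Real.log (alphaOf (strongPow E (m*n))) / ((m*n : ℕ):ℝ) ∈
          {x : ℝ | ∃ k : ℕ, 1 ≤ k ∧ x = Real.log (alphaOf (strongPow E k)) / k} :=
        ⟨m*n, hmn, rfl⟩
      have hle := le_csSup (spernerCap_bddAbove E) hmem
      have hmnpos : (0:ℝ) < ((m*n : ℕ):ℝ) := by exact_mod_cast hmn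
      rw [div_le_iff₀ hmnpos] at hle
      calc Real.log (alphaOf (strongPow E (m*n))) ≤ spernerCap E * ((m*n : ℕ):ℝ) := hle
        _ = ((m*n : ℕ):ℝ) * spernerCap E := mul_comm _ _
    calc (m:ℝ) * Real.log A.card = Real.log ((A.card:ℝ)^m) := by rw [Real.log_pow]
      _ ≤ Real.log (((m*M+1 : ℕ):ℝ) * (alphaOf (strongPow E (m*n)) : ℝ)) :=
          Real.log_le_log (by positivity) hcast
      _ = Real.log ((m*M+1 : ℕ):ℝ) + Real.log (alphaOf (strongPow E (m*n))) :=
          Real.log_mul (ne_of_gt hmpos) (ne_of_gt hαpos)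
      _ ≤ Real.log ((m*M+1 : ℕ):ℝ) + ((m*n : ℕ):ℝ) * spernerCap E := by linarith
  have hfinal : ∀ m : ℕ, 1 ≤ m →
      Real.log A.card - n * spernerCap E ≤ (Real.log m + Real.log ((M:ℝ)+1)) / m := by
    intro m hm
    have hkey := key m hm
    have hm1 : (1:ℝ) ≤ (m:ℝ) := by exact_mod_cast hm
    have hlog_le : Real.log ((m*M+1 : ℕ):ℝ) ≤ Real.log m + Real.log ((M:ℝ)+1) := by
      have h1 : ((m*M+1:ℕ):ℝ) ≤ (m:ℝ) * ((M:ℝ)+1) := by push_cast; nlinarith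
      calc Real.log ((m*M+1 : ℕ):ℝ) ≤ Real.log ((m:ℝ) * ((M:ℝ)+1)) :=
            Real.log_le_log (by positivity) h1
        _ = Real.log m + Real.log ((M:ℝ)+1) := Real.log_mul (by linarith) (by positivity)
    rw [le_div_iff₀ (by linarith : (0:ℝ) < (m:ℝ))]
    have hmn : ((m*n : ℕ):ℝ) = (m:ℝ) * (n:ℝ) := by push_cast; ring
    rw [hmn] at hkey
    nlinarith [hkey, hlog_le]
  have htend : Tendsto (fun m : ℕ => (Real.log m + Real.log ((M:ℝ)+1)) / m) atTop (nhds 0) := by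
    have t1 : Tendsto (fun m : ℕ => Real.log m / m) atTop (nhds 0) :=
      (Real.isLittleO_log_id_atTop.tendsto_div_nhds_zero).comp tendsto_natCast_atTop_atTop
    have t2 : Tendsto (fun m : ℕ => Real.log ((M:ℝ)+1) / m) atTop (nhds 0) :=
      tendsto_const_div_atTop_nhds_zero_nat _
    have t3 := t1.add t2
    rw [add_zero] at t3
    refine t3.congr (fun m => ?_)
    rw [add_div]
  have hle0 : Real.log A.card - n * spernerCap E ≤ 0 := by
    apply ge_of_tendsto htend
    filter_upwards [eventually_ge_atTop 1] with m hm
    exact hfinal m hm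
  linarith

/-- For every directed graph `G` and every `n ≥ 1`, `ρ(Gⁿ) ≤ e^{n Σ(G)}`. -/
theorem rho_strongPow_le_exp_spernerCap {V : Type*} [Fintype V] (E : V → V → Prop)
    (hirr : ∀ x, ¬ E x x) (n : ℕ) (hn : 1 ≤ n) :
    (rhoOf (strongPow E n) : ℝ) ≤ Real.exp (n * spernerCap E) := by
  classical
  have hne : {k : ℕ | ∃ A : Finset (Fin n → V),
      AcyclicOn (strongPow E n) ↑A ∧ A.card = k}.Nonempty :=
    ⟨0, ∅, by rw [Finset.coe_empty]; exact acyclicOn_empty _, rfl⟩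
  have hbdd : BddAbove {k : ℕ | ∃ A : Finset (Fin n → V),
      AcyclicOn (strongPow E n) ↑A ∧ A.card = k} := by
    refine ⟨Fintype.card (Fin n → V), ?_⟩
    rintro k ⟨A, -, rfl⟩
    simpa using Finset.card_le_univ A
  have hmem : rhoOf (strongPow E n) ∈ {k : ℕ | ∃ A : Finset (Fin n → V),
      AcyclicOn (strongPow E n) ↑A ∧ A.card = k} := Nat.sSup_mem hne hbdd
  obtain ⟨A, hacA, hcardA⟩ := hmem
  rcases Nat.eq_zero_or_pos (rhoOf (strongPow E n)) with h0 | hpos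
  · rw [h0]
    simp only [Nat.cast_zero]
    exact (Real.exp_pos _).le
  · have h1 : 1 ≤ A.card := by omega
    have hlog := log_card_le E n hn A h1 hacA
    calc (rhoOf (strongPow E n) : ℝ) = (A.card : ℝ) := by rw [hcardA]
      _ = Real.exp (Real.log A.card) :=
          (Real.exp_log (by exact_mod_cast h1 : (0:ℝ) < (A.card:ℝ))).symm
      _ ≤ Real.exp ((n:ℝ) * spernerCap E) := Real.exp_le_exp.mpr hlog
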